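/- arXiv:1410.0563 — 4 statements merged into one kernel-verified Lean document; each statement's English description precedes it below -/
import Mathlib

section
/- Let D be a nonempty open connected subset of the quaternions ℍ and let f : D → ℍ. If for every q ∈ D the limit lim_{h→0, h≠0} (f(q+h) − f(q)) h⁻¹ exists in ℍ (the limit taken along the punctured neighborhood filter of 0 in ℍ), then f is a left-affine function: there exist ω, λ ∈ ℍ such that f(q) = ωq + λ for all q ∈ D. -/
open scoped Quaternion
open Filter Asymptotics Set

noncomputable section
namespace Sud

def qI : ℍ[ℝ] := ⟨0,1,0,0⟩
def qJ : ℍ[ℝ] := ⟨0,0,1,0⟩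
def qK : ℍ[ℝ] := ⟨0,0,0,1⟩

@[simp] lemma qI_re : qI.re = 0 := rfl
@[simp] lemma qI_imI : qI.imI = 1 := rfl
@[simp] lemma qI_imJ : qI.imJ = 0 := rfl
@[simp] lemma qI_imK : qI.imK = 0 := rfl
@[simp] lemma qJ_re : qJ.re = 0 := rfl
@[simp] lemma qJ_imI : qJ.imI = 0 := rfl
@[simp] lemma qJ_imJ : qJ.imJ = 1 := rfl
@[simp] lemma qJ_imK : qJ.imK = 0 := rfl
@[simp] lemma qK_re : qK.re = 0 := rfl
@[simp] lemma qK_imI : qK.imI = 0 := rfl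
@[simp] lemma qK_imJ : qK.imJ = 0 := rfl
@[simp] lemma qK_imK : qK.imK = 1 := rfl

@[simp] lemma mk_re (a b c d : ℝ) : (⟨a,b,c,d⟩ : ℍ[ℝ]).re = a := rfl
@[simp] lemma mk_imI (a b c d : ℝ) : (⟨a,b,c,d⟩ : ℍ[ℝ]).imI = b := rfl
@[simp] lemma mk_imJ (a b c d : ℝ) : (⟨a,b,c,d⟩ : ℍ[ℝ]).imJ = c := rfl
@[simp] lemma mk_imK (a b c d : ℝ) : (⟨a,b,c,d⟩ : ℍ[ℝ]).imK = d := rfl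

lemma quat_ext_iff {a b : ℍ[ℝ]} : a = b ↔ a.re = b.re ∧ a.imI = b.imI ∧ a.imJ = b.imJ ∧ a.imK = b.imK := by
  constructor
  · rintro rfl; exact ⟨rfl, rfl, rfl, rfl⟩
  · rintro ⟨h1, h2, h3, h4⟩; exact QuaternionAlgebra.ext h1 h2 h3 h4

@[simp] lemma mk_add' (a b c d a' b' c' d' : ℝ) :
    @HAdd.hAdd ℍ[ℝ] ℍ[ℝ] ℍ[ℝ] _ ⟨a,b,c,d⟩ ⟨a',b',c',d'⟩ = ⟨a+a', b+b', c+c', d+d'⟩ := rfl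
@[simp] lemma mk_smul' (r a b c d : ℝ) : @HSMul.hSMul ℝ ℍ[ℝ] ℍ[ℝ] _ r ⟨a,b,c,d⟩ = ⟨r*a, r*b, r*c, r*d⟩ := rfl
@[simp] lemma mk_eta' (p : ℍ[ℝ]) : (⟨p.re, p.imI, p.imJ, p.imK⟩ : ℍ[ℝ]) = p := rfl

def mkCLM (c1 c2 : ℍ[ℝ] → ℝ × ℝ)
    (hadd : ∀ p q : ℍ[ℝ], c1 (p+q) = c1 p + c1 q ∧ c2 (p+q) = c2 p + c2 q)
    (hsmul : ∀ (r : ℝ) (p : ℍ[ℝ]), c1 (r • p) = r • c1 p ∧ c2 (r • p) = r • c2 p) :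
    ℍ[ℝ] →L[ℝ] ℂ × ℂ := LinearMap.toContinuousLinearMap
  { toFun := fun p => (⟨(c1 p).1, (c1 p).2⟩, ⟨(c2 p).1, (c2 p).2⟩)
    map_add' := fun p q => by
      have h := hadd p q
      simp [Prod.ext_iff, Complex.ext_iff, h.1, h.2]
    map_smul' := fun r p => by
      have h := hsmul r p
      simp [Prod.ext_iff, Complex.ext_iff, h.1, h.2] }

def EA : ℍ[ℝ] →L[ℝ] ℂ × ℂ :=
  mkCLM (fun p => (p.re, p.imI)) (fun p => (p.imJ, -p.imK))
    (fun p q => by simp [Prod.ext_iff]; try ring) (fun r p => by simp [Prod.ext_iff]; try ring)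

@[simp] lemma EA_apply (p : ℍ[ℝ]) : EA p = (⟨p.re, p.imI⟩, ⟨p.imJ, -p.imK⟩) := rfl

def EAinv : ℂ × ℂ →L[ℝ] ℍ[ℝ] := LinearMap.toContinuousLinearMap
  { toFun := fun zw => ⟨zw.1.re, zw.1.im, zw.2.re, -zw.2.im⟩
    map_add' := fun x y => by simp [quat_ext_iff]; exact QuaternionAlgebra.ext rfl rfl rfl (add_comm _ _)
    map_smul' := fun r x => by simp [quat_ext_iff]; rfl }

@[simp] lemma EAinv_apply (zw : ℂ × ℂ) : EAinv zw = ⟨zw.1.re, zw.1.im, zw.2.re, -zw.2.im⟩ := rfl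

lemma hEAinv : ∀ p, EAinv (EA p) = p := by intro p; simp [quat_ext_iff]
lemma hEAinv' : ∀ y, EA (EAinv y) = y := by
  intro y; exact Prod.ext (Complex.ext rfl rfl) (Complex.ext rfl (neg_neg _))

lemma hEA : ∀ (p : ℍ[ℝ]) (h : ℂ),
    EA (p * (h.re • (1:ℍ[ℝ]) + h.im • qI)) = h • EA (p * (1:ℍ[ℝ])) := by
  intro p h
  simp [Prod.ext_iff, Complex.ext_iff, Quaternion.re_mul, Quaternion.imI_mul,
    Quaternion.imJ_mul, Quaternion.imK_mul, Complex.mul_re, Complex.mul_im, smul_eq_mul]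
  refine ⟨⟨by ring, by ring⟩, by ring, by ring⟩

def EB : ℍ[ℝ] →L[ℝ] ℂ × ℂ :=
  mkCLM (fun p => (p.re, p.imJ)) (fun p => (p.imI, p.imK))
    (fun p q => by simp [Prod.ext_iff]) (fun r p => by simp [Prod.ext_iff])

@[simp] lemma EB_apply (p : ℍ[ℝ]) : EB p = (⟨p.re, p.imJ⟩, ⟨p.imI, p.imK⟩) := rfl

def EBinv : ℂ × ℂ →L[ℝ] ℍ[ℝ] := LinearMap.toContinuousLinearMap
  { toFun := fun zw => ⟨zw.1.re, zw.2.re, zw.1.im, zw.2.im⟩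
    map_add' := fun x y => by simp [quat_ext_iff]; rfl
    map_smul' := fun r x => by simp [quat_ext_iff]; rfl }

@[simp] lemma EBinv_apply (zw : ℂ × ℂ) : EBinv zw = ⟨zw.1.re, zw.2.re, zw.1.im, zw.2.im⟩ := rfl

lemma hEBinv : ∀ p, EBinv (EB p) = p := by intro p; simp [quat_ext_iff]
lemma hEBinv' : ∀ y, EB (EBinv y) = y := by
  intro y; exact Prod.ext (Complex.ext rfl rfl) (Complex.ext rfl rfl)

lemma hEB : ∀ (p : ℍ[ℝ]) (h : ℂ),
    EB (p * (h.re • (1:ℍ[ℝ]) + h.im • qJ)) = h • EB (p * (1:ℍ[ℝ])) := by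
  intro p h
  simp [Prod.ext_iff, Complex.ext_iff, Quaternion.re_mul, Quaternion.imI_mul,
    Quaternion.imJ_mul, Quaternion.imK_mul, Complex.mul_re, Complex.mul_im, smul_eq_mul]
  refine ⟨⟨by ring, by ring⟩, by ring, by ring⟩

def ED : ℍ[ℝ] →L[ℝ] ℂ × ℂ :=
  mkCLM (fun p => (p.re, p.imK)) (fun p => (p.imI, -p.imJ))
    (fun p q => by simp [Prod.ext_iff]; try ring) (fun r p => by simp [Prod.ext_iff]; try ring)

@[simp] lemma ED_apply (p : ℍ[ℝ]) : ED p = (⟨p.re, p.imK⟩, ⟨p.imI, -p.imJ⟩) := rfl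

def EDinv : ℂ × ℂ →L[ℝ] ℍ[ℝ] := LinearMap.toContinuousLinearMap
  { toFun := fun zw => ⟨zw.1.re, zw.2.re, -zw.2.im, zw.1.im⟩
    map_add' := fun x y => by simp [quat_ext_iff]; exact QuaternionAlgebra.ext rfl rfl (add_comm _ _) rfl
    map_smul' := fun r x => by simp [quat_ext_iff]; rfl }

@[simp] lemma EDinv_apply (zw : ℂ × ℂ) : EDinv zw = ⟨zw.1.re, zw.2.re, -zw.2.im, zw.1.im⟩ := rfl

lemma hEDinv : ∀ p, EDinv (ED p) = p := by intro p; simp [quat_ext_iff]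
lemma hEDinv' : ∀ y, ED (EDinv y) = y := by
  intro y; exact Prod.ext (Complex.ext rfl rfl) (Complex.ext rfl (neg_neg _))

lemma hED : ∀ (p : ℍ[ℝ]) (h : ℂ),
    ED (p * (h.re • (1:ℍ[ℝ]) + h.im • qK)) = h • ED (p * (1:ℍ[ℝ])) := by
  intro p h
  simp [Prod.ext_iff, Complex.ext_iff, Quaternion.re_mul, Quaternion.imI_mul,
    Quaternion.imJ_mul, Quaternion.imK_mul, Complex.mul_re, Complex.mul_im, smul_eq_mul]
  refine ⟨⟨by ring, by ring⟩, by ring, by ring⟩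

def EC : ℍ[ℝ] →L[ℝ] ℂ × ℂ :=
  mkCLM (fun p => (p.imI, p.imJ)) (fun p => (p.re, -p.imK))
    (fun p q => by simp [Prod.ext_iff]; try ring) (fun r p => by simp [Prod.ext_iff]; try ring)

@[simp] lemma EC_apply (p : ℍ[ℝ]) : EC p = (⟨p.imI, p.imJ⟩, ⟨p.re, -p.imK⟩) := rfl

def ECinv : ℂ × ℂ →L[ℝ] ℍ[ℝ] := LinearMap.toContinuousLinearMap
  { toFun := fun zw => ⟨zw.2.re, zw.1.re, zw.1.im, -zw.2.im⟩
    map_add' := fun x y => by simp [quat_ext_iff]; exact QuaternionAlgebra.ext rfl rfl rfl (add_comm _ _)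
    map_smul' := fun r x => by simp [quat_ext_iff]; rfl }

@[simp] lemma ECinv_apply (zw : ℂ × ℂ) : ECinv zw = ⟨zw.2.re, zw.1.re, zw.1.im, -zw.2.im⟩ := rfl

lemma hECinv : ∀ p, ECinv (EC p) = p := by intro p; simp [quat_ext_iff]
lemma hECinv' : ∀ y, EC (ECinv y) = y := by
  intro y; exact Prod.ext (Complex.ext rfl rfl) (Complex.ext rfl (neg_neg _))

lemma hEC : ∀ (p : ℍ[ℝ]) (h : ℂ),
    EC (p * (h.re • qI + h.im • qJ)) = h • EC (p * qI) := by
  intro p h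
  simp [Prod.ext_iff, Complex.ext_iff, Quaternion.re_mul, Quaternion.imI_mul,
    Quaternion.imJ_mul, Quaternion.imK_mul, Complex.mul_re, Complex.mul_im, smul_eq_mul]
  refine ⟨⟨by ring, by ring⟩, by ring, by ring⟩

-- quaternion unit facts
lemma qI_ne : qI ≠ 0 := by
  intro h; have := congrArg QuaternionAlgebra.imI h; simp [qI] at this
lemma qK_ne : qK ≠ 0 := by
  intro h; have := congrArg QuaternionAlgebra.imK h; simp [qK] at this
lemma qIJ : qI * qJ = qK := by
  simp [quat_ext_iff, Quaternion.re_mul, Quaternion.imI_mul,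
    Quaternion.imJ_mul, Quaternion.imK_mul]
lemma qJI : qJ * qI = -qK := by
  simp [quat_ext_iff, Quaternion.re_mul, Quaternion.imI_mul,
    Quaternion.imJ_mul, Quaternion.imK_mul]

lemma clm_comp_hasDerivAt {α β : Type*} [NormedAddCommGroup α] [NormedSpace ℝ α]
    [NormedAddCommGroup β] [NormedSpace ℝ β] (ψ : α →L[ℝ] β) {u : ℝ → α} {u' : α} {t : ℝ}
    (h : HasDerivAt u u' t) : HasDerivAt (fun s => ψ (u s)) (ψ u') t := by
  simpa [Function.comp_def] using (ψ.hasFDerivAt.comp_hasDerivAt t h)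

lemma dir {α : Type*} [NormedAddCommGroup α] [NormedSpace ℂ α] {G : ℂ → α} {g : α} {z c : ℂ}
    (hG : HasDerivAt G g z) :
    HasDerivAt (fun t : ℝ => G (z + t • c)) (c • g) 0 := by
  have hcurve : HasDerivAt (fun t : ℝ => z + t • c) c 0 := by
    simpa using ((hasDerivAt_id (0:ℝ)).smul_const c).const_add z
  have hG' : HasFDerivAt G (((1 : ℂ →L[ℂ] ℂ).smulRight g).restrictScalars ℝ) (z + (0:ℝ) • c) := by
    simpa [ContinuousLinearMap.smulRight_one_eq_toSpanSingleton] using (hG.hasFDerivAt.restrictScalars ℝ)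
  simpa [Function.comp_def] using hG'.comp_hasDerivAt 0 hcurve

section Slice

variable {D : Set ℍ[ℝ]} (hD : IsOpen D) {L f : ℍ[ℝ] → ℍ[ℝ]}
  (hL : ∀ q ∈ D, HasFDerivAt f (ContinuousLinearMap.mul ℝ ℍ[ℝ] (L q)) q)
  {v₁ v₂ : ℍ[ℝ]} (hv₁ : v₁ ≠ 0)
  {E : ℍ[ℝ] →L[ℝ] ℂ × ℂ} {Einv : ℂ × ℂ →L[ℝ] ℍ[ℝ]}
  (hEinv : ∀ p, Einv (E p) = p) (hEinv' : ∀ y, E (Einv y) = y)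
  (hE : ∀ (p : ℍ[ℝ]) (h : ℂ), E (p * (h.re • v₁ + h.im • v₂)) = h • E (p * v₁))

include hD hL hE in
lemma slice_core {x : ℍ[ℝ]} {z : ℂ} (hz : x + (z.re • v₁ + z.im • v₂) ∈ D) :
    ∃ g : ℂ × ℂ,
      HasDerivAt (fun w : ℂ => E (L (x + (w.re • v₁ + w.im • v₂)) * v₁)) g z := by
  set A : ℂ →L[ℝ] ℍ[ℝ] := Complex.reCLM.smulRight v₁ + Complex.imCLM.smulRight v₂ with hA
  have hAapp : ∀ w : ℂ, A w = w.re • v₁ + w.im • v₂ := by intro w; simp [hA]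
  set Ω : Set ℂ := (fun w => x + A w) ⁻¹' D with hΩdef
  have hΩ : IsOpen Ω := hD.preimage (continuous_const.add A.continuous)
  set F : ℂ → ℂ × ℂ := fun w => E (f (x + A w)) with hF
  have hFd : ∀ w ∈ Ω, HasDerivAt F (E (L (x + A w) * v₁)) w := by
    intro w hw
    have h1 : HasFDerivAt (fun w : ℂ => x + A w) A w := A.hasFDerivAt.const_add x
    have h2 := (hL _ hw).comp w h1
    have h3 := E.hasFDerivAt.comp w h2
    have heq : ((1 : ℂ →L[ℂ] ℂ).smulRight (E (L (x + A w) * v₁))).restrictScalars ℝ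
        = (E.comp ((ContinuousLinearMap.mul ℝ ℍ[ℝ] (L (x + A w))).comp A)) := by
      refine ContinuousLinearMap.ext fun h => ?_
      have h5 := hE (L (x + A w)) h
      rw [hAapp] at h5
      simp only [ContinuousLinearMap.coe_restrictScalars', ContinuousLinearMap.smulRight_apply,
        ContinuousLinearMap.one_apply, ContinuousLinearMap.coe_comp', Function.comp_apply,
        ContinuousLinearMap.mul_apply', hAapp, one_smul]
      rw [h5]
    have h4 : HasFDerivAt F ((1 : ℂ →L[ℂ] ℂ).smulRight (E (L (x + A w) * v₁))) w :=
      hasFDerivAt_of_restrictScalars ℝ h3 heq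
    simpa using h4.hasDerivAt
  have hFdiff : DifferentiableOn ℂ F Ω := fun w hw => ((hFd w hw).differentiableAt).differentiableWithinAt
  have hGdiff : DifferentiableOn ℂ (deriv F) Ω := ((hFdiff.analyticOnNhd hΩ).deriv).differentiableOn
  have hzΩ : z ∈ Ω := by simpa [hΩdef, hAapp] using hz
  have hGz : DifferentiableAt ℂ (fun w => E (L (x + A w) * v₁)) z := by
    have hd := (hGdiff z hzΩ).differentiableAt (hΩ.mem_nhds hzΩ)
    apply hd.congr_of_eventuallyEq
    filter_upwards [hΩ.mem_nhds hzΩ] with w hw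
    exact ((hFd w hw).deriv).symm
  refine ⟨deriv (fun w => E (L (x + A w) * v₁)) z, ?_⟩
  have := hGz.hasDerivAt
  have hfun : (fun w : ℂ => E (L (x + A w) * v₁))
      = fun w : ℂ => E (L (x + (w.re • v₁ + w.im • v₂)) * v₁) := by
    funext w; rw [hAapp]
  rwa [hfun] at this

lemma smul_re' (t : ℝ) (z : ℂ) : (t • z).re = t * z.re := by
  simp [Complex.real_smul]
lemma smul_im' (t : ℝ) (z : ℂ) : (t • z).im = t * z.im := by
  simp [Complex.real_smul]
lemma cre (t s : ℝ) (z : ℂ) : ((t • z : ℂ) + s • (1:ℂ)).re = t * z.re + s := by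
  simp [Complex.real_smul]
lemma cim (t s : ℝ) (z : ℂ) : ((t • z : ℂ) + s • (1:ℂ)).im = t * z.im := by
  simp [Complex.real_smul]

include hv₁ hEinv in
lemma recover {g : ℂ × ℂ} {c : ℝ → ℍ[ℝ]}
    (h : HasDerivAt (fun t : ℝ => E (L (c t) * v₁)) g 0) :
    HasDerivAt (fun t : ℝ => L (c t)) (Einv g * v₁⁻¹) 0 := by
  have h1 := clm_comp_hasDerivAt Einv h
  simp only [hEinv] at h1
  have h2 := clm_comp_hasDerivAt ((ContinuousLinearMap.mul ℝ ℍ[ℝ]).flip v₁⁻¹) h1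
  simp only [ContinuousLinearMap.flip_apply, ContinuousLinearMap.mul_apply'] at h2
  simpa [mul_assoc, mul_inv_cancel₀ hv₁] using h2

include hD hL hv₁ hEinv hEinv' hE in
lemma slice_deriv {x : ℍ[ℝ]} (hx : x ∈ D) :
    ∃ N, HasDerivAt (fun t : ℝ => L (x + t • v₁)) N 0 ∧
      HasDerivAt (fun t : ℝ => L (x + t • v₂)) (N * v₂ * v₁⁻¹) 0 := by
  obtain ⟨g, hG⟩ := slice_core hD hL hE (x := x) (z := 0) (by simpa using hx)
  have h1 : HasDerivAt (fun t : ℝ => E (L (x + t • v₁) * v₁)) g 0 := by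
    have hd := dir (c := 1) hG
    have hfun : ∀ t : ℝ, ((0 : ℂ) + t • (1:ℂ)).re • v₁ + ((0 : ℂ) + t • (1:ℂ)).im • v₂
        = t • v₁ := by intro t; simp [Complex.real_smul]
    simpa [hfun] using hd
  have h2 : HasDerivAt (fun t : ℝ => E (L (x + t • v₂) * v₁)) (Complex.I • g) 0 := by
    have hd := dir (c := Complex.I) hG
    have hfun : ∀ t : ℝ, ((0 : ℂ) + t • Complex.I).re • v₁ + ((0 : ℂ) + t • Complex.I).im • v₂
        = t • v₂ := by intro t; simp [Complex.real_smul]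
    simpa [hfun] using hd
  have hN1 := recover hv₁ hEinv h1
  have hN2 := recover hv₁ hEinv h2
  refine ⟨Einv g * v₁⁻¹, hN1, ?_⟩
  have hg : E (Einv g * v₁⁻¹ * v₁) = g := by
    rw [mul_assoc, inv_mul_cancel₀ hv₁, mul_one, hEinv']
  have key : Einv (Complex.I • g) = Einv g * v₁⁻¹ * v₂ := by
    have h3 := hE (Einv g * v₁⁻¹) Complex.I
    simp only [Complex.I_re, Complex.I_im, zero_smul, one_smul, zero_add] at h3
    rw [hg] at h3
    rw [← h3, hEinv]
  rwa [key] at hN2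

include hD hL hv₁ hEinv hE in
lemma slice_const (hM : ∀ y ∈ D, HasDerivAt (fun t : ℝ => L (y + t • v₁)) 0 0)
    {x : ℍ[ℝ]} (z : ℂ)
    (hseg : ∀ t : ℝ, t ∈ Set.Icc (0:ℝ) 1 → x + ((t * z.re) • v₁ + (t * z.im) • v₂) ∈ D) :
    L (x + (z.re • v₁ + z.im • v₂)) = L x := by
  have hmem : ∀ t : ℝ, t ∈ Set.Icc (0:ℝ) 1 →
      x + ((t • z).re • v₁ + (t • z).im • v₂) ∈ D := by
    intro t ht
    simpa only [smul_re', smul_im'] using hseg t ht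
  have hG0 : ∀ t : ℝ, t ∈ Set.Icc (0:ℝ) 1 →
      HasDerivAt (fun w : ℂ => E (L (x + (w.re • v₁ + w.im • v₂)) * v₁)) 0 (t • z) := by
    intro t ht
    obtain ⟨g, hG⟩ := slice_core hD hL hE (x := x) (z := t • z) (hmem t ht)
    set Φ : ℝ → ℂ × ℂ :=
      fun s => E (L (x + ((t * z.re + s) • v₁ + (t * z.im) • v₂)) * v₁) with hΦ
    have h1 : HasDerivAt Φ g 0 := by
      have hd := dir (c := 1) hG
      refine (one_smul ℂ g ▸ hd.congr_of_eventuallyEq (Filter.Eventually.of_forall fun s => ?_) :)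
      show Φ s = E (L (x + (((t • z : ℂ) + s • (1:ℂ)).re • v₁ + ((t • z : ℂ) + s • (1:ℂ)).im • v₂)) * v₁)
      rw [cre, cim, hΦ]
    have harg : ∀ s : ℝ, (x + ((t • z).re • v₁ + (t • z).im • v₂)) + s • v₁
        = x + ((t * z.re + s) • v₁ + (t * z.im) • v₂) := by
      intro s
      rw [smul_re', smul_im']
      module
    have h2 : HasDerivAt Φ 0 0 := by
      have h3 := clm_comp_hasDerivAt ((ContinuousLinearMap.mul ℝ ℍ[ℝ]).flip v₁)
        (hM _ (hmem t ht))
      have h4 := clm_comp_hasDerivAt E h3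
      simp only [ContinuousLinearMap.flip_apply, ContinuousLinearMap.mul_apply',
        zero_mul, map_zero] at h4
      refine h4.congr_of_eventuallyEq (Filter.Eventually.of_forall fun s => ?_)
      exact congrArg (fun y => E (L y * v₁)) (harg s).symm
    have hg0 : g = 0 := h1.unique h2
    rwa [hg0] at hG
  have hφ : ∀ t ∈ Set.Icc (0:ℝ) 1,
      HasDerivAt (fun s : ℝ => E (L (x + ((s • z : ℂ).re • v₁ + (s • z : ℂ).im • v₂)) * v₁)) 0 t := by
    intro t ht
    have hcurve : HasDerivAt (fun s : ℝ => s • z) z t := by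
      simpa using (hasDerivAt_id t).smul_const z
    have hfd := ((hG0 t ht).hasFDerivAt.restrictScalars ℝ).comp_hasDerivAt t hcurve
    simpa only [Function.comp_def, ContinuousLinearMap.coe_restrictScalars',
      ContinuousLinearMap.smulRight_apply, ContinuousLinearMap.one_apply, one_smul,
      smul_zero, ContinuousLinearMap.toSpanSingleton_apply] using hfd
  have hcont : ContinuousOn
      (fun s : ℝ => E (L (x + ((s • z : ℂ).re • v₁ + (s • z : ℂ).im • v₂)) * v₁)) (Set.Icc 0 1) :=
    fun t ht => (hφ t ht).continuousAt.continuousWithinAt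
  have hconst := constant_of_has_deriv_right_zero hcont
    (fun t ht => (hφ t (Set.Ico_subset_Icc_self ht)).hasDerivWithinAt) 1
    (Set.mem_Icc.mpr ⟨zero_le_one, le_rfl⟩)
  have h10 : E (L (x + (z.re • v₁ + z.im • v₂)) * v₁) = E (L x * v₁) := by
    simpa using hconst
  have h11 := congrArg Einv h10
  rw [hEinv, hEinv] at h11
  exact mul_right_cancel₀ hv₁ h11

end Slice

lemma loc_const {α : Type*} {D : Set ℍ[ℝ]} (hDc : IsPreconnected D) {g : ℍ[ℝ] → α}
    (hloc : ∀ x ∈ D, ∃ r, 0 < r ∧ ∀ y ∈ Metric.ball x r, g y = g x)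
    {x₀ : ℍ[ℝ]} (hx₀ : x₀ ∈ D) : ∀ x ∈ D, g x = g x₀ := by
  by_contra hcon
  push_neg at hcon
  obtain ⟨x₁, hx₁, hne⟩ := hcon
  have hloc' : ∀ x : ℍ[ℝ], ∃ r, 0 < r ∧ (x ∈ D → ∀ y ∈ Metric.ball x r, g y = g x) := by
    intro x
    by_cases hx : x ∈ D
    · obtain ⟨r, hr, hb⟩ := hloc x hx
      exact ⟨r, hr, fun _ => hb⟩
    · exact ⟨1, one_pos, fun h => absurd h hx⟩
  choose R hR hball using hloc'
  have hUo : IsOpen (⋃ x ∈ {x | x ∈ D ∧ g x = g x₀}, Metric.ball x (R x)) :=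
    isOpen_biUnion fun _ _ => Metric.isOpen_ball
  have hVo : IsOpen (⋃ x ∈ {x | x ∈ D ∧ g x ≠ g x₀}, Metric.ball x (R x)) :=
    isOpen_biUnion fun _ _ => Metric.isOpen_ball
  have hcover : D ⊆ (⋃ x ∈ {x | x ∈ D ∧ g x = g x₀}, Metric.ball x (R x))
      ∪ (⋃ x ∈ {x | x ∈ D ∧ g x ≠ g x₀}, Metric.ball x (R x)) := by
    intro x hx
    by_cases hgx : g x = g x₀
    · exact Or.inl (Set.mem_biUnion (Set.mem_setOf.mpr ⟨hx, hgx⟩) (Metric.mem_ball_self (hR x)))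
    · exact Or.inr (Set.mem_biUnion (Set.mem_setOf.mpr ⟨hx, hgx⟩) (Metric.mem_ball_self (hR x)))
  have hUne : (D ∩ (⋃ x ∈ {x | x ∈ D ∧ g x = g x₀}, Metric.ball x (R x))).Nonempty :=
    ⟨x₀, hx₀, Set.mem_biUnion (Set.mem_setOf.mpr ⟨hx₀, rfl⟩) (Metric.mem_ball_self (hR x₀))⟩
  have hVne : (D ∩ (⋃ x ∈ {x | x ∈ D ∧ g x ≠ g x₀}, Metric.ball x (R x))).Nonempty :=
    ⟨x₁, hx₁, Set.mem_biUnion (Set.mem_setOf.mpr ⟨hx₁, hne⟩) (Metric.mem_ball_self (hR x₁))⟩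
  obtain ⟨y, _, hyU, hyV⟩ := hDc _ _ hUo hVo hcover hUne hVne
  obtain ⟨a, ha, hya⟩ := Set.mem_iUnion₂.mp hyU
  obtain ⟨b, hb, hyb⟩ := Set.mem_iUnion₂.mp hyV
  have h1 : g y = g a := hball a ha.1 y hya
  have h2 : g y = g b := hball b hb.1 y hyb
  exact hb.2 (by rw [← h2, h1, ha.2])

lemma mem_ball_aux {x p d : ℍ[ℝ]} {r : ℝ} (h : ‖d‖ < r)
    (hle : Quaternion.normSq p ≤ Quaternion.normSq d) : x + p ∈ Metric.ball x r := by
  rw [Metric.mem_ball, dist_eq_norm, add_sub_cancel_left]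
  have h1 : ‖p‖ * ‖p‖ ≤ ‖d‖ * ‖d‖ := by
    rw [← Quaternion.normSq_eq_norm_mul_self, ← Quaternion.normSq_eq_norm_mul_self]
    exact hle
  nlinarith [norm_nonneg p, norm_nonneg d]

lemma sq_smul_le {t a : ℝ} (h0 : 0 ≤ t) (h1 : t ≤ 1) : (t*a)^2 ≤ a^2 := by
  have h2 : t^2 ≤ 1 := by nlinarith
  calc (t*a)^2 = t^2 * a^2 := by ring
  _ ≤ 1 * a^2 := mul_le_mul_of_nonneg_right h2 (sq_nonneg a)
  _ = a^2 := one_mul _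

lemma one_ne : (1:ℍ[ℝ]) ≠ 0 := by
  intro h
  have := congrArg QuaternionAlgebra.re h
  simp at this

lemma step1 {f : ℍ[ℝ] → ℍ[ℝ]} {q L : ℍ[ℝ]}
    (h : Filter.Tendsto (fun h : ℍ[ℝ] => (f (q + h) - f q) * h⁻¹)
      (nhdsWithin (0 : ℍ[ℝ]) {(0 : ℍ[ℝ])}ᶜ) (nhds L)) :
    HasFDerivAt f (ContinuousLinearMap.mul ℝ ℍ[ℝ] L) q := by
  rw [hasFDerivAt_iff_isLittleO_nhds_zero, Asymptotics.isLittleO_iff]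
  intro c hc
  have h2 := Metric.tendsto_nhds.mp h c hc
  rw [eventually_nhdsWithin_iff] at h2
  filter_upwards [h2] with x hx
  rcases eq_or_ne x 0 with rfl | hx0
  · simp
  · have hd := hx (by simpa using hx0)
    have key : f (q + x) - f q - (ContinuousLinearMap.mul ℝ ℍ[ℝ] L) x
        = ((f (q + x) - f q) * x⁻¹ - L) * x := by
      simp [sub_mul, mul_assoc, inv_mul_cancel₀ hx0]
    rw [key, norm_mul]
    have hle : ‖(f (q + x) - f q) * x⁻¹ - L‖ ≤ c := le_of_lt (by simpa [dist_eq_norm] using hd)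
    exact mul_le_mul_of_nonneg_right hle (norm_nonneg _)

end Sud

open Sud

set_option maxHeartbeats 1000000 in
/-- **Left quaternion differentiability forces left-affine form.**
If `D ⊆ ℍ` is a nonempty open connected set and for every `q ∈ D` the limit
`lim_{h→0, h≠0} (f(q+h) − f(q)) h⁻¹` exists, then `f(q) = ω q + λ` on `D`. -/
theorem left_quaternion_differentiable_is_affine
    (D : Set ℍ[ℝ]) (hD_open : IsOpen D) (hD_conn : IsConnected D)
    (f : ℍ[ℝ] → ℍ[ℝ])
    (hf : ∀ q ∈ D, ∃ L : ℍ[ℝ],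
      Filter.Tendsto (fun h : ℍ[ℝ] => (f (q + h) - f q) * h⁻¹)
        (nhdsWithin (0 : ℍ[ℝ]) {(0 : ℍ[ℝ])}ᶜ) (nhds L)) :
    ∃ ω lambda : ℍ[ℝ], ∀ q ∈ D, f q = ω * q + lambda := by
  classical
  choose! L hL0 using hf
  have hL : ∀ q ∈ D, HasFDerivAt f (ContinuousLinearMap.mul ℝ ℍ[ℝ] (L q)) q :=
    fun q hq => step1 (hL0 q hq)
  -- M = 0 everywhere
  have hM0 : ∀ x ∈ D, HasDerivAt (fun t : ℝ => L (x + t • (1:ℍ[ℝ]))) 0 0 := by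
    intro x hx
    obtain ⟨M, hM1, hMi⟩ := slice_deriv hD_open hL
      one_ne hEAinv hEAinv' hEA hx
    obtain ⟨M', hM'1, hM'j⟩ := slice_deriv hD_open hL
      one_ne hEBinv hEBinv' hEB hx
    obtain ⟨N, hNi, hNj⟩ := slice_deriv hD_open hL qI_ne hECinv hECinv' hEC hx
    rw [inv_one, mul_one] at hMi hM'j
    have e1 : M' = M := hM'1.unique hM1
    have e2 : N = M * qI := hNi.unique hMi
    have e3 : N * qJ * qI⁻¹ = M' * qJ := hNj.unique hM'j
    rw [e1, e2] at e3
    have e4 : M * (qI * qJ) = M * (qJ * qI) := by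
      have h6 := congrArg (fun y => y * qI) e3
      simpa [mul_assoc, inv_mul_cancel₀ qI_ne] using h6
    have e5 : M * qK = 0 := by
      rw [qIJ, qJI, mul_neg] at e4
      have e6 : M * qK + M * qK = 0 := by nth_rewrite 2 [e4]; simp
      rw [← two_smul ℝ] at e6
      rcases smul_eq_zero.mp e6 with h | h
      · norm_num at h
      · exact h
    have e7 : M = 0 := by
      rcases mul_eq_zero.mp e5 with h | h
      · exact h
      · exact absurd h qK_ne
    rwa [e7] at hM1
  -- L locally constant
  have hLloc : ∀ x ∈ D, ∃ r, 0 < r ∧ ∀ y ∈ Metric.ball x r, L y = L x := by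
    intro x hx
    obtain ⟨r, hr, hball⟩ := Metric.isOpen_iff.mp hD_open x hx
    refine ⟨r, hr, fun y hy => ?_⟩
    have hdn : ‖y - x‖ < r := by rwa [Metric.mem_ball, dist_eq_norm] at hy
    obtain ⟨α, hα⟩ : ∃ a, y.re - x.re = a := ⟨_, rfl⟩
    obtain ⟨β, hβ⟩ : ∃ a, y.imI - x.imI = a := ⟨_, rfl⟩
    obtain ⟨γ, hγ⟩ : ∃ a, y.imJ - x.imJ = a := ⟨_, rfl⟩
    obtain ⟨δ, hδ⟩ : ∃ a, y.imK - x.imK = a := ⟨_, rfl⟩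
    -- step 1 : along qJ
    have s1 : L (x + (((⟨0, γ⟩ : ℂ).re) • (1:ℍ[ℝ]) + ((⟨0, γ⟩ : ℂ).im) • qJ)) = L x := by
      apply slice_const hD_open hL one_ne hEBinv hEB hM0
      intro t ht
      apply hball
      apply mem_ball_aux hdn
      simp only [Quaternion.normSq_def']
      simp
      rw [hα, hβ, hγ, hδ]
      nlinarith [sq_smul_le ht.1 ht.2 (a := γ), sq_nonneg α, sq_nonneg β, sq_nonneg δ]
    have s1' : L (x + γ • qJ) = L x := by simpa using s1
    -- step 2 : along qK from x + γ•qJ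
    have s2 : L ((x + γ • qJ) + (((⟨0, δ⟩ : ℂ).re) • (1:ℍ[ℝ]) + ((⟨0, δ⟩ : ℂ).im) • qK))
        = L (x + γ • qJ) := by
      apply slice_const hD_open hL one_ne hEDinv hED hM0
      intro t ht
      have heq : (x + γ • qJ) + ((t * (⟨0, δ⟩ : ℂ).re) • (1:ℍ[ℝ]) + (t * (⟨0, δ⟩ : ℂ).im) • qK)
          = x + (γ • qJ + ((t * 0) • (1:ℍ[ℝ]) + (t * δ) • qK)) := by
        show (x + γ • qJ) + ((t * 0) • (1:ℍ[ℝ]) + (t * δ) • qK) = _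
        module
      rw [heq]
      apply hball
      apply mem_ball_aux hdn
      simp only [Quaternion.normSq_def']
      simp
      rw [hα, hβ, hγ, hδ]
      nlinarith [sq_smul_le ht.1 ht.2 (a := δ), sq_nonneg α, sq_nonneg β, sq_nonneg γ]
    have s2' : L (x + (γ • qJ + δ • qK)) = L (x + γ • qJ) := by
      have heq2 : (x + γ • qJ) + ((0:ℝ) • (1:ℍ[ℝ]) + δ • qK) = x + (γ • qJ + δ • qK) := by module
      rw [← heq2]
      simpa using s2
    -- step 3 : along 1, qI from x + γ•qJ + δ•qK
    have s3 : L ((x + (γ • qJ + δ • qK)) + (((⟨α, β⟩ : ℂ).re) • (1:ℍ[ℝ]) + ((⟨α, β⟩ : ℂ).im) • qI))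
        = L (x + (γ • qJ + δ • qK)) := by
      apply slice_const hD_open hL one_ne hEAinv hEA hM0
      intro t ht
      have heq : (x + (γ • qJ + δ • qK)) + ((t * (⟨α, β⟩ : ℂ).re) • (1:ℍ[ℝ]) + (t * (⟨α, β⟩ : ℂ).im) • qI)
          = x + ((γ • qJ + δ • qK) + ((t * α) • (1:ℍ[ℝ]) + (t * β) • qI)) := by
        show (x + (γ • qJ + δ • qK)) + ((t * α) • (1:ℍ[ℝ]) + (t * β) • qI) = _
        module
      rw [heq]
      apply hball
      apply mem_ball_aux hdn
      simp only [Quaternion.normSq_def']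
      simp
      rw [hα, hβ, hγ, hδ]
      nlinarith [sq_smul_le ht.1 ht.2 (a := α), sq_smul_le ht.1 ht.2 (a := β)]
    have hy_eq : (x + (γ • qJ + δ • qK)) + (α • (1:ℍ[ℝ]) + β • qI) = y := by
      rw [quat_ext_iff]
      refine ⟨?_, ?_, ?_, ?_⟩ <;>
        simp [← hα, ← hβ, ← hγ, ← hδ]
    calc L y = L ((x + (γ • qJ + δ • qK)) + (α • (1:ℍ[ℝ]) + β • qI)) := by rw [hy_eq]
    _ = L (x + (γ • qJ + δ • qK)) := by simpa using s3
    _ = L (x + γ • qJ) := s2'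
    _ = L x := s1'
  obtain ⟨x₀, hx₀⟩ := hD_conn.nonempty
  have hLc : ∀ x ∈ D, L x = L x₀ := loc_const hD_conn.isPreconnected hLloc hx₀
  set ω := L x₀ with hω
  -- f - ω q locally constant
  have hfloc : ∀ x ∈ D, ∃ r, 0 < r ∧
      ∀ y ∈ Metric.ball x r, f y - ω * y = f x - ω * x := by
    intro x hx
    obtain ⟨r, hr, hball⟩ := Metric.isOpen_iff.mp hD_open x hx
    refine ⟨r, hr, fun y hy => ?_⟩
    have hdn : ‖y - x‖ < r := by rwa [Metric.mem_ball, dist_eq_norm] at hy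
    have key : ∀ t ∈ Set.Icc (0:ℝ) 1,
        HasDerivAt (fun s : ℝ => f (x + s • (y - x)) - ω * (x + s • (y - x))) 0 t := by
      intro t ht
      have hpt : x + t • (y - x) ∈ D := by
        apply hball
        apply mem_ball_aux hdn
        simp only [Quaternion.normSq_def']
        simp
        nlinarith [sq_smul_le ht.1 ht.2 (a := y.re - x.re), sq_smul_le ht.1 ht.2 (a := y.imI - x.imI),
          sq_smul_le ht.1 ht.2 (a := y.imJ - x.imJ), sq_smul_le ht.1 ht.2 (a := y.imK - x.imK)]
      have h1 := hL _ hpt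
      rw [hLc _ hpt] at h1
      have h2 : HasFDerivAt (fun q : ℍ[ℝ] => ω * q)
          (ContinuousLinearMap.mul ℝ ℍ[ℝ] ω) (x + t • (y - x)) := by
        exact (ContinuousLinearMap.mul ℝ ℍ[ℝ] ω).hasFDerivAt
      have h3 : HasFDerivAt (fun q : ℍ[ℝ] => f q - ω * q)
          (0 : ℍ[ℝ] →L[ℝ] ℍ[ℝ]) (x + t • (y - x)) := by
        simpa [Pi.sub_def] using h1.sub h2
      have hcurve : HasDerivAt (fun s : ℝ => x + s • (y - x)) (y - x) t := by
        simpa using ((hasDerivAt_id t).smul_const (y - x)).const_add x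
      have h4 := h3.comp_hasDerivAt t hcurve
      simpa [Function.comp_def] using h4
    have hcont : ContinuousOn (fun s : ℝ => f (x + s • (y - x)) - ω * (x + s • (y - x)))
        (Set.Icc 0 1) := fun t ht => (key t ht).continuousAt.continuousWithinAt
    have hconst := constant_of_has_deriv_right_zero hcont
      (fun t ht => (key t (Set.Ico_subset_Icc_self ht)).hasDerivWithinAt) 1
      (Set.mem_Icc.mpr ⟨zero_le_one, le_rfl⟩)
    simpa using hconst
  have hfc := loc_const hD_conn.isPreconnected hfloc hx₀
  refine ⟨ω, f x₀ - ω * x₀, fun q hq => ?_⟩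
  have := hfc q hq
  have h5 : f q = f x₀ - ω * x₀ + ω * q := sub_eq_iff_eq_add.mp this
  rw [h5, add_comm]
end
end

section
/- Let A₁, A₂, A₃, A₄ be M × NS quaternion matrices (with columns indexed by the entry positions (n,s) of an N × S quaternion matrix). If A₁·vec(Q) + A₂·vec(Q^i) + A₃·vec(Q^j) + A₄·vec(Q^k) = 0 for every Q ∈ ℍ^{N×S}, then A₁ = A₂ = A₃ = A₄ = 0. Likewise, if A₁·vec(Q*) + A₂·vec(Q^{i*}) + A₃·vec(Q^{j*}) + A₄·vec(Q^{k*}) = 0 for every Q ∈ ℍ^{N×S}, then A₁ = A₂ = A₃ = A₄ = 0. -/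
open scoped Quaternion

noncomputable section

/-- The imaginary unit `i` of the quaternions. -/
def qI : ℍ[ℝ] := ⟨0, 1, 0, 0⟩
/-- The imaginary unit `j` of the quaternions. -/
def qJ : ℍ[ℝ] := ⟨0, 0, 1, 0⟩
/-- The imaginary unit `k` of the quaternions. -/
def qK : ℍ[ℝ] := ⟨0, 0, 0, 1⟩

/-- The quaternion involution `q^η = −η q η` (for a pure unit quaternion `η`). -/
def invo (η q : ℍ[ℝ]) : ℍ[ℝ] := -(η * q * η)

/-- Entrywise involution of an `N × S` quaternion matrix. -/
def entryInvo {N S : ℕ} (η : ℍ[ℝ]) (Q : Fin N → Fin S → ℍ[ℝ]) : Fin N → Fin S → ℍ[ℝ] :=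
  fun n s => invo η (Q n s)

/-- Entrywise quaternion conjugation of a matrix. -/
def entryStar {N S : ℕ} (Q : Fin N → Fin S → ℍ[ℝ]) : Fin N → Fin S → ℍ[ℝ] :=
  fun n s => star (Q n s)

/-- `vec` of an `N × S` quaternion matrix: the vector of its entries, indexed by pairs `(n,s)`. -/
def vecM {N S : ℕ} (Q : Fin N → Fin S → ℍ[ℝ]) : Fin N × Fin S → ℍ[ℝ] :=
  fun p => Q p.1 p.2

/- ### Auxiliary computational lemmas -/

lemma invoI1 : invo qI 1 = 1 := by ext <;> simp [invo] <;> simp [qI]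
lemma invoJ1 : invo qJ 1 = 1 := by ext <;> simp [invo] <;> simp [qJ]
lemma invoK1 : invo qK 1 = 1 := by ext <;> simp [invo] <;> simp [qK]
lemma invoII : invo qI qI = qI := by ext <;> simp [invo] <;> simp [qI]
lemma invoJI : invo qJ qI = -qI := by ext <;> simp [invo] <;> simp [qI, qJ]
lemma invoKI : invo qK qI = -qI := by ext <;> simp [invo] <;> simp [qI, qK]
lemma invoIJ : invo qI qJ = -qJ := by ext <;> simp [invo] <;> simp [qI, qJ]
lemma invoJJ : invo qJ qJ = qJ := by ext <;> simp [invo] <;> simp [qJ]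
lemma invoKJ : invo qK qJ = -qJ := by ext <;> simp [invo] <;> simp [qJ, qK]
lemma invoIK : invo qI qK = -qK := by ext <;> simp [invo] <;> simp [qI, qK]
lemma invoJK : invo qJ qK = -qK := by ext <;> simp [invo] <;> simp [qJ, qK]
lemma invoKK : invo qK qK = qK := by ext <;> simp [invo] <;> simp [qK]

lemma starqI : star qI = -qI := by ext <;> simp <;> simp [qI]
lemma starqJ : star qJ = -qJ := by ext <;> simp <;> simp [qJ]
lemma starqK : star qK = -qK := by ext <;> simp <;> simp [qK]

lemma qI_ne : qI ≠ 0 := by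
  intro h; have := congrArg QuaternionAlgebra.imI h; simp [qI] at this
lemma qJ_ne : qJ ≠ 0 := by
  intro h; have := congrArg QuaternionAlgebra.imJ h; simp [qJ] at this
lemma qK_ne : qK ≠ 0 := by
  intro h; have := congrArg QuaternionAlgebra.imK h; simp [qK] at this

lemma quat_solve (a b c d : ℍ[ℝ]) (h1 : a + b + c + d = 0) (h2 : a + b - c - d = 0)
    (h3 : a - b + c - d = 0) (h4 : a - b - c + d = 0) :
    a = 0 ∧ b = 0 ∧ c = 0 ∧ d = 0 := by
  have four_ne : (4 : ℍ[ℝ]) ≠ 0 := by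
    have h4 : (4 : ℍ[ℝ]) = ((4 : ℕ) : ℍ[ℝ]) := by norm_cast
    rw [h4]
    intro h
    have := congrArg QuaternionAlgebra.re h
    rw [Quaternion.re_natCast] at this
    norm_num at this
  have ha : (4 : ℍ[ℝ]) * a = 0 := by
    calc (4 : ℍ[ℝ]) * a
        = (a + b + c + d) + (a + b - c - d) + ((a - b + c - d) + (a - b - c + d)) := by
          noncomm_ring
      _ = 0 := by rw [h1, h2, h3, h4]; simp
  have hb : (4 : ℍ[ℝ]) * b = 0 := by
    calc (4 : ℍ[ℝ]) * b
        = (a + b + c + d) + (a + b - c - d) - ((a - b + c - d) + (a - b - c + d)) := by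
          noncomm_ring
      _ = 0 := by rw [h1, h2, h3, h4]; simp
  have hc : (4 : ℍ[ℝ]) * c = 0 := by
    calc (4 : ℍ[ℝ]) * c
        = (a + b + c + d) - (a + b - c - d) + ((a - b + c - d) - (a - b - c + d)) := by
          noncomm_ring
      _ = 0 := by rw [h1, h2, h3, h4]; simp
  have hd : (4 : ℍ[ℝ]) * d = 0 := by
    calc (4 : ℍ[ℝ]) * d
        = (a + b + c + d) - (a + b - c - d) - ((a - b + c - d) - (a - b - c + d)) := by
          noncomm_ring
      _ = 0 := by rw [h1, h2, h3, h4]; simp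
  exact ⟨(mul_eq_zero.mp ha).resolve_left four_ne,
    (mul_eq_zero.mp hb).resolve_left four_ne,
    (mul_eq_zero.mp hc).resolve_left four_ne,
    (mul_eq_zero.mp hd).resolve_left four_ne⟩

lemma vec_single {N S : ℕ} (p : Fin N × Fin S) (q : ℍ[ℝ]) (f : ℍ[ℝ] → ℍ[ℝ]) (hf : f 0 = 0) :
    vecM (fun n s => f (Pi.single (M := fun _ => ℍ[ℝ]) p q (n, s))) = Pi.single p (f q) := by
  funext c
  obtain ⟨n, s⟩ := c
  simp only [vecM]
  rcases eq_or_ne (n, s) p with h | h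
  · subst h; simp
  · rw [Pi.single_eq_of_ne h, Pi.single_eq_of_ne h, hf]

lemma pointwise {M N S : ℕ} (A₁ A₂ A₃ A₄ : Matrix (Fin M) (Fin N × Fin S) ℍ[ℝ])
    (f₁ f₂ f₃ f₄ : ℍ[ℝ] → ℍ[ℝ]) (h₁ : f₁ 0 = 0) (h₂ : f₂ 0 = 0) (h₃ : f₃ 0 = 0) (h₄ : f₄ 0 = 0)
    (h : ∀ Q : Fin N → Fin S → ℍ[ℝ],
      A₁.mulVec (vecM fun n s => f₁ (Q n s)) + A₂.mulVec (vecM fun n s => f₂ (Q n s))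
        + A₃.mulVec (vecM fun n s => f₃ (Q n s)) + A₄.mulVec (vecM fun n s => f₄ (Q n s)) = 0)
    (m : Fin M) (p : Fin N × Fin S) (q : ℍ[ℝ]) :
    A₁ m p * f₁ q + A₂ m p * f₂ q + A₃ m p * f₃ q + A₄ m p * f₄ q = 0 := by
  have h' := h (fun n s => Pi.single (M := fun _ => ℍ[ℝ]) p q (n, s))
  rw [vec_single p q f₁ h₁, vec_single p q f₂ h₂, vec_single p q f₃ h₃, vec_single p q f₄ h₄,
    Matrix.mulVec_single, Matrix.mulVec_single, Matrix.mulVec_single,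
    Matrix.mulVec_single] at h'
  simpa using congrFun h' m

/-- **Linear independence of the differentials of the involutions** (Lemma 1):
if `A₁ vec(Q) + A₂ vec(Q^i) + A₃ vec(Q^j) + A₄ vec(Q^k) = 0` for all `Q`, then all `Aₙ = 0`;
likewise for the conjugate case. -/
theorem vec_involutions_independent {M N S : ℕ}
    (A₁ A₂ A₃ A₄ : Matrix (Fin M) (Fin N × Fin S) ℍ[ℝ]) :
    ((∀ Q : Fin N → Fin S → ℍ[ℝ],
        A₁.mulVec (vecM Q) + A₂.mulVec (vecM (entryInvo qI Q))
          + A₃.mulVec (vecM (entryInvo qJ Q)) + A₄.mulVec (vecM (entryInvo qK Q)) = 0) →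
      A₁ = 0 ∧ A₂ = 0 ∧ A₃ = 0 ∧ A₄ = 0)
    ∧
    ((∀ Q : Fin N → Fin S → ℍ[ℝ],
        A₁.mulVec (vecM (entryStar Q)) + A₂.mulVec (vecM (entryStar (entryInvo qI Q)))
          + A₃.mulVec (vecM (entryStar (entryInvo qJ Q)))
          + A₄.mulVec (vecM (entryStar (entryInvo qK Q))) = 0) →
      A₁ = 0 ∧ A₂ = 0 ∧ A₃ = 0 ∧ A₄ = 0) := by
  constructor
  · intro h
    have key := pointwise A₁ A₂ A₃ A₄ id (invo qI) (invo qJ) (invo qK)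
      rfl (by simp [invo]) (by simp [invo]) (by simp [invo]) h
    have main : ∀ m p, A₁ m p = 0 ∧ A₂ m p = 0 ∧ A₃ m p = 0 ∧ A₄ m p = 0 := by
      intro m p
      set a := A₁ m p; set b := A₂ m p; set c := A₃ m p; set d := A₄ m p
      have F1 : a + b + c + d = 0 := by
        have h' := key m p 1
        simp only [id, invoI1, invoJ1, invoK1, mul_one] at h'
        exact h'
      have F2 : a + b - c - d = 0 := by
        have h' := key m p qI
        simp only [id, invoII, invoJI, invoKI] at h'
        have : (a + b - c - d) * qI = a * qI + b * qI + c * -qI + d * -qI := by noncomm_ring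
        exact (mul_eq_zero.mp (this.trans h')).resolve_right qI_ne
      have F3 : a - b + c - d = 0 := by
        have h' := key m p qJ
        simp only [id, invoIJ, invoJJ, invoKJ] at h'
        have : (a - b + c - d) * qJ = a * qJ + b * -qJ + c * qJ + d * -qJ := by noncomm_ring
        exact (mul_eq_zero.mp (this.trans h')).resolve_right qJ_ne
      have F4 : a - b - c + d = 0 := by
        have h' := key m p qK
        simp only [id, invoIK, invoJK, invoKK] at h'
        have : (a - b - c + d) * qK = a * qK + b * -qK + c * -qK + d * qK := by noncomm_ring
        exact (mul_eq_zero.mp (this.trans h')).resolve_right qK_ne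
      exact quat_solve a b c d F1 F2 F3 F4
    exact ⟨Matrix.ext fun m p => (main m p).1, Matrix.ext fun m p => (main m p).2.1,
      Matrix.ext fun m p => (main m p).2.2.1, Matrix.ext fun m p => (main m p).2.2.2⟩
  · intro h
    have key := pointwise A₁ A₂ A₃ A₄ star (fun x => star (invo qI x))
      (fun x => star (invo qJ x)) (fun x => star (invo qK x))
      (by simp) (by simp [invo]) (by simp [invo]) (by simp [invo]) h
    have main : ∀ m p, A₁ m p = 0 ∧ A₂ m p = 0 ∧ A₃ m p = 0 ∧ A₄ m p = 0 := by
      intro m p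
      set a := A₁ m p; set b := A₂ m p; set c := A₃ m p; set d := A₄ m p
      have F1 : a + b + c + d = 0 := by
        have h' := key m p 1
        simp only [invoI1, invoJ1, invoK1, star_one, mul_one] at h'
        exact h'
      have F2 : a + b - c - d = 0 := by
        have h' := key m p qI
        simp only [invoII, invoJI, invoKI, star_neg, starqI, neg_neg] at h'
        have : (-(a + b - c - d)) * qI = a * -qI + b * -qI + c * qI + d * qI := by noncomm_ring
        have h0 := (mul_eq_zero.mp (this.trans h')).resolve_right qI_ne
        exact neg_eq_zero.mp h0
      have F3 : a - b + c - d = 0 := by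
        have h' := key m p qJ
        simp only [invoIJ, invoJJ, invoKJ, star_neg, starqJ, neg_neg] at h'
        have : (-(a - b + c - d)) * qJ = a * -qJ + b * qJ + c * -qJ + d * qJ := by noncomm_ring
        have h0 := (mul_eq_zero.mp (this.trans h')).resolve_right qJ_ne
        exact neg_eq_zero.mp h0
      have F4 : a - b - c + d = 0 := by
        have h' := key m p qK
        simp only [invoIK, invoJK, invoKK, star_neg, starqK, neg_neg] at h'
        have : (-(a - b - c + d)) * qK = a * -qK + b * qK + c * qK + d * -qK := by noncomm_ring
        have h0 := (mul_eq_zero.mp (this.trans h')).resolve_right qK_ne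
        exact neg_eq_zero.mp h0
      exact quat_solve a b c d F1 F2 F3 F4
    exact ⟨Matrix.ext fun m p => (main m p).1, Matrix.ext fun m p => (main m p).2.1,
      Matrix.ext fun m p => (main m p).2.2.1, Matrix.ext fun m p => (main m p).2.2.2⟩
end
end

section
/- Let F : ℍ^{N×S} → ℍ^{M×R} and G : ℍ^{N×S} → ℍ^{R×P} be ℝ-differentiable at Q ∈ ℍ^{N×S}, let H(Q) = F(Q)G(Q) (matrix product), and let μ ∈ ℍ, μ ≠ 0. Then the GHR Jacobian of H satisfies the product rule D_{Q^μ}H(Q) = (I_P ⊗ F(Q)) · D_{Q^μ}G(Q) + D_{Q^μ}F̃(Q), where F̃ is the function P ↦ F(P)·G(Q) with G held constant at its value at Q, and I_P ⊗ F(Q) is the Kronecker product, i.e. the MP × RP matrix with ((m,p),(r,p′)) entry equal to F(Q)_{mr} if p = p′ and 0 otherwise. -/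
open scoped Quaternion

noncomputable section

/-- The `N × S` quaternion matrix with entry `d` at position `(n,s)` and `0` elsewhere. -/
def single {N S : ℕ} (n : Fin N) (s : Fin S) (d : ℍ[ℝ]) : Fin N → Fin S → ℍ[ℝ] :=
  Pi.single n (Pi.single s d)

/-- Real directional (Fréchet) derivative of a scalar function of a matrix variable, in the
direction `d` at the single entry `(n,s)` (the other entries held fixed). -/
def pd {N S : ℕ} (f : (Fin N → Fin S → ℍ[ℝ]) → ℍ[ℝ]) (Q : Fin N → Fin S → ℍ[ℝ])
    (n : Fin N) (s : Fin S) (d : ℍ[ℝ]) : ℍ[ℝ] :=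
  fderiv ℝ f Q (single n s d)

/-- Left GHR derivative `∂f/∂q_{ns}^μ` of a scalar function `f` with respect to the entry
`q_{ns}` of its matrix argument:
`¼(∂f/∂q_a − (∂f/∂q_b) i^μ − (∂f/∂q_c) j^μ − (∂f/∂q_d) k^μ)`, with `x^μ = μ x μ⁻¹`. -/
def ghrE {N S : ℕ} (μ : ℍ[ℝ]) (f : (Fin N → Fin S → ℍ[ℝ]) → ℍ[ℝ])
    (Q : Fin N → Fin S → ℍ[ℝ]) (n : Fin N) (s : Fin S) : ℍ[ℝ] :=
  (1 / 4 : ℝ) • (pd f Q n s 1 - pd f Q n s qI * (μ * qI * μ⁻¹)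
    - pd f Q n s qJ * (μ * qJ * μ⁻¹) - pd f Q n s qK * (μ * qK * μ⁻¹))

/-- The GHR Jacobian `D_{Q^μ}F(Q)`: the `MP × NS` quaternion matrix whose `((m,p),(n,s))` entry
is the left GHR derivative `∂F_{mp}/∂q_{ns}^μ`. -/
def ghrJac {N S M P : ℕ} (μ : ℍ[ℝ])
    (F : (Fin N → Fin S → ℍ[ℝ]) → (Fin M → Fin P → ℍ[ℝ]))
    (Q : Fin N → Fin S → ℍ[ℝ]) : Matrix (Fin M × Fin P) (Fin N × Fin S) ℍ[ℝ] :=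
  Matrix.of fun mp ns => ghrE μ (fun X => F X mp.1 mp.2) Q ns.1 ns.2

/-- Quaternion matrix product. -/
def mmul {M R P : ℕ} (A : Fin M → Fin R → ℍ[ℝ]) (B : Fin R → Fin P → ℍ[ℝ]) :
    Fin M → Fin P → ℍ[ℝ] :=
  fun m p => ∑ r, A m r * B r p

/-- The Kronecker product `I_P ⊗ A`: the `MP × RP` matrix with `((m,p),(r,p′))` entry
`A_{mr}` if `p = p′` and `0` otherwise. -/
def kronIdLeft {M R : ℕ} (P : ℕ) (A : Fin M → Fin R → ℍ[ℝ]) :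
    Matrix (Fin M × Fin P) (Fin R × Fin P) ℍ[ℝ] :=
  Matrix.of fun mp rp => if mp.2 = rp.2 then A mp.1 rp.1 else 0

lemma pd_mul {N S : ℕ} (f g : (Fin N → Fin S → ℍ[ℝ]) → ℍ[ℝ]) (Q : Fin N → Fin S → ℍ[ℝ])
    (n : Fin N) (s : Fin S) (d : ℍ[ℝ])
    (hf : DifferentiableAt ℝ f Q) (hg : DifferentiableAt ℝ g Q) :
    pd (fun X => f X * g X) Q n s d = f Q * pd g Q n s d + pd f Q n s d * g Q := by
  unfold pd
  rw [fderiv_fun_mul' hf hg]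
  simp [smul_eq_mul]

lemma pd_mul_const {N S : ℕ} (f : (Fin N → Fin S → ℍ[ℝ]) → ℍ[ℝ]) (c : ℍ[ℝ])
    (Q : Fin N → Fin S → ℍ[ℝ]) (n : Fin N) (s : Fin S) (d : ℍ[ℝ])
    (hf : DifferentiableAt ℝ f Q) :
    pd (fun X => f X * c) Q n s d = pd f Q n s d * c := by
  have := pd_mul f (fun _ => c) Q n s d hf (differentiableAt_const c)
  simpa [pd] using this

lemma ghrE_mul {N S : ℕ} (μ : ℍ[ℝ]) (f g : (Fin N → Fin S → ℍ[ℝ]) → ℍ[ℝ])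
    (Q : Fin N → Fin S → ℍ[ℝ]) (n : Fin N) (s : Fin S)
    (hf : DifferentiableAt ℝ f Q) (hg : DifferentiableAt ℝ g Q) :
    ghrE μ (fun X => f X * g X) Q n s =
      f Q * ghrE μ g Q n s + ghrE μ (fun X => f X * g Q) Q n s := by
  unfold ghrE
  rw [pd_mul f g Q n s 1 hf hg, pd_mul f g Q n s qI hf hg, pd_mul f g Q n s qJ hf hg,
    pd_mul f g Q n s qK hf hg, pd_mul_const f (g Q) Q n s 1 hf,
    pd_mul_const f (g Q) Q n s qI hf, pd_mul_const f (g Q) Q n s qJ hf,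
    pd_mul_const f (g Q) Q n s qK hf]
  simp only [mul_sub, sub_mul, add_mul, mul_add, mul_assoc, smul_sub, smul_add,
    mul_smul_comm]
  abel

lemma ghrE_sum {N S : ℕ} {ι : Type*} (μ : ℍ[ℝ]) (t : Finset ι)
    (f : ι → (Fin N → Fin S → ℍ[ℝ]) → ℍ[ℝ]) (Q : Fin N → Fin S → ℍ[ℝ])
    (n : Fin N) (s : Fin S) (hf : ∀ i ∈ t, DifferentiableAt ℝ (f i) Q) :
    ghrE μ (fun X => ∑ i ∈ t, f i X) Q n s = ∑ i ∈ t, ghrE μ (f i) Q n s := by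
  have hpd : ∀ d, pd (fun X => ∑ i ∈ t, f i X) Q n s d = ∑ i ∈ t, pd (f i) Q n s d := by
    intro d
    unfold pd
    rw [fderiv_fun_sum hf]
    simp
  unfold ghrE
  rw [hpd, hpd, hpd, hpd]
  rw [Finset.sum_mul, Finset.sum_mul, Finset.sum_mul, ← Finset.sum_sub_distrib,
    ← Finset.sum_sub_distrib, ← Finset.sum_sub_distrib, Finset.smul_sum]

/-- **GHR matrix product rule** (Theorem 1, first identity):
`D_{Q^μ}(FG)(Q) = (I_P ⊗ F(Q)) D_{Q^μ}G(Q) + D_{Q^μ}(F·G(Q))(Q)`,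
the last Jacobian taken with `G` held constant at its value at `Q`. -/
theorem ghr_product_rule {N S M R P : ℕ} (μ : ℍ[ℝ]) (hμ : μ ≠ 0)
    (F : (Fin N → Fin S → ℍ[ℝ]) → (Fin M → Fin R → ℍ[ℝ]))
    (G : (Fin N → Fin S → ℍ[ℝ]) → (Fin R → Fin P → ℍ[ℝ]))
    (Q : Fin N → Fin S → ℍ[ℝ])
    (hF : DifferentiableAt ℝ F Q) (hG : DifferentiableAt ℝ G Q) :
    ghrJac μ (fun X => mmul (F X) (G X)) Q =
      kronIdLeft P (F Q) * ghrJac μ G Q + ghrJac μ (fun X => mmul (F X) (G Q)) Q := by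
  have hFe : ∀ (m : Fin M) (r : Fin R), DifferentiableAt ℝ (fun X => F X m r) Q :=
    fun m r => differentiableAt_pi.mp (differentiableAt_pi.mp hF m) r
  have hGe : ∀ (r : Fin R) (p : Fin P), DifferentiableAt ℝ (fun X => G X r p) Q :=
    fun r p => differentiableAt_pi.mp (differentiableAt_pi.mp hG r) p
  apply Matrix.ext
  rintro ⟨m, p⟩ ⟨n, s⟩
  have hL : ghrE μ (fun X => mmul (F X) (G X) m p) Q n s =
      ∑ r, (F Q m r * ghrE μ (fun X => G X r p) Q n s +
        ghrE μ (fun X => F X m r * G Q r p) Q n s) := by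
    have heq : (fun X => mmul (F X) (G X) m p) =
        fun X => ∑ r, (fun (r : Fin R) X => F X m r * G X r p) r X := rfl
    rw [heq, ghrE_sum μ Finset.univ _ Q n s (fun r _ => (hFe m r).fun_mul (hGe r p))]
    exact Finset.sum_congr rfl fun r _ => ghrE_mul μ _ _ Q n s (hFe m r) (hGe r p)
  have hR2 : ghrE μ (fun X => mmul (F X) (G Q) m p) Q n s =
      ∑ r, ghrE μ (fun X => F X m r * G Q r p) Q n s := by
    have heq : (fun X => mmul (F X) (G Q) m p) =
        fun X => ∑ r, (fun (r : Fin R) X => F X m r * G Q r p) r X := rfl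
    rw [heq, ghrE_sum μ Finset.univ _ Q n s
      (fun r _ => (hFe m r).fun_mul (differentiableAt_const _))]
  simp only [Matrix.add_apply, Matrix.mul_apply, ghrJac, kronIdLeft, Matrix.of_apply, hL, hR2,
    Fintype.sum_prod_type, ite_mul, zero_mul, Finset.sum_ite_eq, Finset.mem_univ, if_true,
    Finset.sum_add_distrib]
end
end

section
/- Let G : ℍ^{N×S} → ℍ^{M×P} be ℝ-differentiable at Q ∈ ℍ^{N×S}, let F : ℍ^{M×P} → ℍ^{R×T} be ℝ-differentiable at G(Q), set H(Q) := F(G(Q)), and let μ ∈ ℍ, μ ≠ 0. Then the GHR chain rule holds: D_{Q^μ}H(Q) = Σ_{ν∈{1,i,j,k}} (D_{X^ν}F)(G(Q)) · (D_{Q^μ}G^ν)(Q), where G^ν denotes the function Q ↦ (G(Q))^ν (entrywise involution x^ν = νxν⁻¹) and (D_{X^ν}F)(G(Q)) is the GHR Jacobian of F with respect to the ν-rotation of its matrix argument, evaluated at G(Q). -/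
open scoped Quaternion

noncomputable section

set_option maxHeartbeats 4000000

/-- Entrywise quaternion rotation `x ↦ ν x ν⁻¹` of a matrix. -/
def rotM {M P : ℕ} (ν : ℍ[ℝ]) (A : Fin M → Fin P → ℍ[ℝ]) : Fin M → Fin P → ℍ[ℝ] :=
  fun m p => ν * A m p * ν⁻¹

/-! ### auxiliary algebraic lemmas -/

lemma qI_inv : qI⁻¹ = -qI := inv_eq_of_mul_eq_one_right (by ext <;> simp [Quaternion.re_mul, Quaternion.imI_mul, Quaternion.imJ_mul, Quaternion.imK_mul, Quaternion.re_smul] <;> simp [qI])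
lemma qJ_inv : qJ⁻¹ = -qJ := inv_eq_of_mul_eq_one_right (by ext <;> simp [Quaternion.re_mul, Quaternion.imI_mul, Quaternion.imJ_mul, Quaternion.imK_mul, Quaternion.re_smul] <;> simp [qJ])
lemma qK_inv : qK⁻¹ = -qK := inv_eq_of_mul_eq_one_right (by ext <;> simp [Quaternion.re_mul, Quaternion.imI_mul, Quaternion.imJ_mul, Quaternion.imK_mul, Quaternion.re_smul] <;> simp [qK])

lemma mII : qI * qI = -1 := by ext <;> simp [Quaternion.re_mul, Quaternion.imI_mul, Quaternion.imJ_mul, Quaternion.imK_mul, Quaternion.re_smul] <;> simp [qI]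
lemma mIJ : qI * qJ = qK := by ext <;> simp [Quaternion.re_mul, Quaternion.imI_mul, Quaternion.imJ_mul, Quaternion.imK_mul, Quaternion.re_smul] <;> simp [qI, qJ, qK]
lemma mIK : qI * qK = -qJ := by ext <;> simp [Quaternion.re_mul, Quaternion.imI_mul, Quaternion.imJ_mul, Quaternion.imK_mul, Quaternion.re_smul] <;> simp [qI, qJ, qK]
lemma mJI : qJ * qI = -qK := by ext <;> simp [Quaternion.re_mul, Quaternion.imI_mul, Quaternion.imJ_mul, Quaternion.imK_mul, Quaternion.re_smul] <;> simp [qI, qJ, qK]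
lemma mJJ : qJ * qJ = -1 := by ext <;> simp [Quaternion.re_mul, Quaternion.imI_mul, Quaternion.imJ_mul, Quaternion.imK_mul, Quaternion.re_smul] <;> simp [qJ]
lemma mJK : qJ * qK = qI := by ext <;> simp [Quaternion.re_mul, Quaternion.imI_mul, Quaternion.imJ_mul, Quaternion.imK_mul, Quaternion.re_smul] <;> simp [qI, qJ, qK]
lemma mKI : qK * qI = qJ := by ext <;> simp [Quaternion.re_mul, Quaternion.imI_mul, Quaternion.imJ_mul, Quaternion.imK_mul, Quaternion.re_smul] <;> simp [qI, qJ, qK]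
lemma mKJ : qK * qJ = -qI := by ext <;> simp [Quaternion.re_mul, Quaternion.imI_mul, Quaternion.imJ_mul, Quaternion.imK_mul, Quaternion.re_smul] <;> simp [qI, qJ, qK]
lemma mKK : qK * qK = -1 := by ext <;> simp [Quaternion.re_mul, Quaternion.imI_mul, Quaternion.imJ_mul, Quaternion.imK_mul, Quaternion.re_smul] <;> simp [qK]

lemma keyalg (A B C E d : ℍ[ℝ]) :
    d.re • A + d.imI • B + d.imJ • C + d.imK • E =
      ((1/4:ℝ) • (A - B * ((1:ℍ[ℝ]) * qI * 1⁻¹) - C * ((1:ℍ[ℝ]) * qJ * 1⁻¹) - E * ((1:ℍ[ℝ]) * qK * 1⁻¹))) * ((1:ℍ[ℝ]) * d * 1⁻¹)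
      + ((1/4:ℝ) • (A - B * (qI * qI * qI⁻¹) - C * (qI * qJ * qI⁻¹) - E * (qI * qK * qI⁻¹))) * (qI * d * qI⁻¹)
      + ((1/4:ℝ) • (A - B * (qJ * qI * qJ⁻¹) - C * (qJ * qJ * qJ⁻¹) - E * (qJ * qK * qJ⁻¹))) * (qJ * d * qJ⁻¹)
      + ((1/4:ℝ) • (A - B * (qK * qI * qK⁻¹) - C * (qK * qJ * qK⁻¹) - E * (qK * qK * qK⁻¹))) * (qK * d * qK⁻¹) := by
  simp only [qI_inv, qJ_inv, qK_inv, inv_one, one_mul, mul_one, mul_neg, neg_mul, neg_neg,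
    mII, mIJ, mIK, mJI, mJJ, mJK, mKI, mKJ, mKK]
  ext <;> simp [Quaternion.re_mul, Quaternion.imI_mul, Quaternion.imJ_mul, Quaternion.imK_mul, Quaternion.re_smul] <;> simp [qI, qJ, qK] <;> ring

/-! ### continuous linear maps -/

/-- Evaluation at entry `(r,t)` as a continuous linear map. -/
def evalCLM {R T : ℕ} (r : Fin R) (t : Fin T) : (Fin R → Fin T → ℍ[ℝ]) →L[ℝ] ℍ[ℝ] :=
  (ContinuousLinearMap.proj (R := ℝ) (φ := fun _ : Fin T => ℍ[ℝ]) t).comp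
    (ContinuousLinearMap.proj (R := ℝ) (φ := fun _ : Fin R => Fin T → ℍ[ℝ]) r)

/-- `single n s` as a continuous linear map. -/
def singleCLM {N S : ℕ} (n : Fin N) (s : Fin S) : ℍ[ℝ] →L[ℝ] (Fin N → Fin S → ℍ[ℝ]) :=
  LinearMap.toContinuousLinearMap
    ((LinearMap.single ℝ (fun _ : Fin N => Fin S → ℍ[ℝ]) n).comp
      (LinearMap.single ℝ (fun _ : Fin S => ℍ[ℝ]) s))

/-- `x ↦ ν * x * ν⁻¹` as a continuous linear map. -/
def rotCLM (ν : ℍ[ℝ]) : ℍ[ℝ] →L[ℝ] ℍ[ℝ] :=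
  LinearMap.toContinuousLinearMap
    ((LinearMap.mulRight ℝ ν⁻¹).comp (LinearMap.mulLeft ℝ ν))

@[simp] lemma evalCLM_apply {R T : ℕ} (r : Fin R) (t : Fin T) (u : Fin R → Fin T → ℍ[ℝ]) :
    evalCLM r t u = u r t := rfl
@[simp] lemma singleCLM_apply {N S : ℕ} (n : Fin N) (s : Fin S) (d : ℍ[ℝ]) :
    singleCLM n s d = single n s d := rfl
@[simp] lemma rotCLM_apply (ν d : ℍ[ℝ]) : rotCLM ν d = ν * d * ν⁻¹ := rfl

lemma pd_clm {N S M P : ℕ} (e : (Fin M → Fin P → ℍ[ℝ]) →L[ℝ] ℍ[ℝ])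
    {G : (Fin N → Fin S → ℍ[ℝ]) → (Fin M → Fin P → ℍ[ℝ])} {Q : Fin N → Fin S → ℍ[ℝ]}
    (hG : DifferentiableAt ℝ G Q) (n : Fin N) (s : Fin S) (d : ℍ[ℝ]) :
    pd (fun X => e (G X)) Q n s d = e (fderiv ℝ G Q (single n s d)) := by
  unfold pd
  rw [show (fun X => e (G X)) = (⇑e) ∘ G from rfl,
    fderiv_comp Q e.differentiableAt hG, ContinuousLinearMap.fderiv]
  rfl

lemma clm_decomp (L : ℍ[ℝ] →L[ℝ] ℍ[ℝ]) (d : ℍ[ℝ]) :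
    L d = d.re • L 1 + d.imI • L qI + d.imJ • L qJ + d.imK • L qK := by
  conv_lhs => rw [show d = d.re • (1:ℍ[ℝ]) + d.imI • qI + d.imJ • qJ + d.imK • qK by
    ext <;> simp [Quaternion.re_mul, Quaternion.imI_mul, Quaternion.imJ_mul, Quaternion.imK_mul, Quaternion.re_smul] <;> simp [qI, qJ, qK]]
  simp

lemma ghr_rep (L : ℍ[ℝ] →L[ℝ] ℍ[ℝ]) (d : ℍ[ℝ]) :
    L d =
      ((1/4:ℝ) • (L 1 - L qI * ((1:ℍ[ℝ]) * qI * 1⁻¹) - L qJ * ((1:ℍ[ℝ]) * qJ * 1⁻¹) - L qK * ((1:ℍ[ℝ]) * qK * 1⁻¹))) * ((1:ℍ[ℝ]) * d * 1⁻¹)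
      + ((1/4:ℝ) • (L 1 - L qI * (qI * qI * qI⁻¹) - L qJ * (qI * qJ * qI⁻¹) - L qK * (qI * qK * qI⁻¹))) * (qI * d * qI⁻¹)
      + ((1/4:ℝ) • (L 1 - L qI * (qJ * qI * qJ⁻¹) - L qJ * (qJ * qJ * qJ⁻¹) - L qK * (qJ * qK * qJ⁻¹))) * (qJ * d * qJ⁻¹)
      + ((1/4:ℝ) • (L 1 - L qI * (qK * qI * qK⁻¹) - L qJ * (qK * qJ * qK⁻¹) - L qK * (qK * qK * qK⁻¹))) * (qK * d * qK⁻¹) := by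
  rw [clm_decomp L d]
  exact keyalg (L 1) (L qI) (L qJ) (L qK) d

lemma distrib4 (q : ℝ) (c1 c2 c3 c4 v1 vi vj vk w1 wi wj wk x1 xi xj xk y1 yi yj yk X1 X2 X3 : ℍ[ℝ]) :
    q • ((c1*v1 + c2*w1 + c3*x1 + c4*y1)
      - (c1*vi + c2*wi + c3*xi + c4*yi) * X1
      - (c1*vj + c2*wj + c3*xj + c4*yj) * X2
      - (c1*vk + c2*wk + c3*xk + c4*yk) * X3)
    = c1 * (q • (v1 - vi*X1 - vj*X2 - vk*X3))
    + c2 * (q • (w1 - wi*X1 - wj*X2 - wk*X3))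
    + c3 * (q • (x1 - xi*X1 - xj*X2 - xk*X3))
    + c4 * (q • (y1 - yi*X1 - yj*X2 - yk*X3)) := by
  simp only [mul_smul_comm, ← smul_add]
  congr 1
  noncomm_ring

lemma sum_single {M P : ℕ} (u : Fin M → Fin P → ℍ[ℝ]) :
    ∑ j : Fin M × Fin P, single j.1 j.2 (u j.1 j.2) = u := by
  funext a b
  rw [Fintype.sum_prod_type]
  simp [single, Finset.sum_apply, Pi.single_apply, apply_ite (fun g : Fin P → ℍ[ℝ] => g b),
    Finset.sum_ite_eq]

/-- **GHR chain rule** (Theorem 2, first identity):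
`D_{Q^μ}(F ∘ G)(Q) = Σ_{ν∈{1,i,j,k}} (D_{X^ν}F)(G(Q)) · (D_{Q^μ}G^ν)(Q)`. -/
theorem ghr_chain_rule {N S M P R T : ℕ} (μ : ℍ[ℝ]) (hμ : μ ≠ 0)
    (G : (Fin N → Fin S → ℍ[ℝ]) → (Fin M → Fin P → ℍ[ℝ]))
    (F : (Fin M → Fin P → ℍ[ℝ]) → (Fin R → Fin T → ℍ[ℝ]))
    (Q : Fin N → Fin S → ℍ[ℝ])
    (hG : DifferentiableAt ℝ G Q) (hF : DifferentiableAt ℝ F (G Q)) :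
    ghrJac μ (fun X => F (G X)) Q =
      ghrJac (1 : ℍ[ℝ]) F (G Q) * ghrJac μ (fun X => rotM (1 : ℍ[ℝ]) (G X)) Q
        + ghrJac qI F (G Q) * ghrJac μ (fun X => rotM qI (G X)) Q
        + ghrJac qJ F (G Q) * ghrJac μ (fun X => rotM qJ (G X)) Q
        + ghrJac qK F (G Q) * ghrJac μ (fun X => rotM qK (G X)) Q := by
  refine Matrix.ext fun rt ns => ?_
  obtain ⟨r, t⟩ := rt
  obtain ⟨n, s⟩ := ns
  simp only [ghrJac, Matrix.add_apply, Matrix.mul_apply, Matrix.of_apply, rotM]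
  have hH : DifferentiableAt ℝ (fun X => F (G X)) Q := hF.comp Q hG
  -- per-entry directional derivatives of `F` at `G Q`
  have hp2 : ∀ (j : Fin M × Fin P) (y : ℍ[ℝ]),
      pd (fun X => F X r t) (G Q) j.1 j.2 y = fderiv ℝ F (G Q) (single j.1 j.2 y) r t := by
    intro j y
    have h := pd_clm (evalCLM r t) hF j.1 j.2 y
    simp only [evalCLM_apply] at h
    exact h
  have h2 : ∀ (ν : ℍ[ℝ]) (j : Fin M × Fin P),
      ghrE ν (fun X => F X r t) (G Q) j.1 j.2
        = (1/4:ℝ) • (fderiv ℝ F (G Q) (single j.1 j.2 1) r t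
            - fderiv ℝ F (G Q) (single j.1 j.2 qI) r t * (ν * qI * ν⁻¹)
            - fderiv ℝ F (G Q) (single j.1 j.2 qJ) r t * (ν * qJ * ν⁻¹)
            - fderiv ℝ F (G Q) (single j.1 j.2 qK) r t * (ν * qK * ν⁻¹)) := by
    intro ν j
    simp only [ghrE, hp2]
  -- per-entry directional derivatives of the rotated `G`
  have hp3 : ∀ (ν : ℍ[ℝ]) (j : Fin M × Fin P) (d : ℍ[ℝ]),
      pd (fun X => ν * G X j.1 j.2 * ν⁻¹) Q n s d
        = ν * fderiv ℝ G Q (single n s d) j.1 j.2 * ν⁻¹ := by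
    intro ν j d
    have h := pd_clm ((rotCLM ν).comp (evalCLM j.1 j.2)) hG n s d
    simp only [ContinuousLinearMap.coe_comp', Function.comp_apply, evalCLM_apply,
      rotCLM_apply] at h
    exact h
  have h3 : ∀ (ν : ℍ[ℝ]) (j : Fin M × Fin P),
      ghrE μ (fun X => ν * G X j.1 j.2 * ν⁻¹) Q n s
        = (1/4:ℝ) • (ν * fderiv ℝ G Q (single n s 1) j.1 j.2 * ν⁻¹
            - ν * fderiv ℝ G Q (single n s qI) j.1 j.2 * ν⁻¹ * (μ * qI * μ⁻¹)
            - ν * fderiv ℝ G Q (single n s qJ) j.1 j.2 * ν⁻¹ * (μ * qJ * μ⁻¹)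
            - ν * fderiv ℝ G Q (single n s qK) j.1 j.2 * ν⁻¹ * (μ * qK * μ⁻¹)) := by
    intro ν j
    simp only [ghrE, hp3]
  -- the composite: expand through the intermediate entries
  have h1 : ∀ d : ℍ[ℝ], pd (fun X => F (G X) r t) Q n s d
      = ∑ j : Fin M × Fin P,
          fderiv ℝ F (G Q) (single j.1 j.2 (fderiv ℝ G Q (single n s d) j.1 j.2)) r t := by
    intro d
    have h := pd_clm (evalCLM r t) hH n s d
    rw [show fderiv ℝ (fun X => F (G X)) Q
        = (fderiv ℝ F (G Q)).comp (fderiv ℝ G Q) from fderiv_comp Q hF hG] at h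
    simp only [evalCLM_apply, ContinuousLinearMap.coe_comp', Function.comp_apply] at h
    rw [h]
    conv_lhs => rw [← sum_single (fderiv ℝ G Q (single n s d))]
    rw [map_sum, Finset.sum_apply, Finset.sum_apply]
  -- GHR representation of each per-entry linear map of `F`
  have h5 : ∀ (j : Fin M × Fin P) (d : ℍ[ℝ]),
      fderiv ℝ F (G Q) (single j.1 j.2 (fderiv ℝ G Q (single n s d) j.1 j.2)) r t
        = ((1/4:ℝ) • (fderiv ℝ F (G Q) (single j.1 j.2 1) r t
              - fderiv ℝ F (G Q) (single j.1 j.2 qI) r t * ((1:ℍ[ℝ]) * qI * 1⁻¹)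
              - fderiv ℝ F (G Q) (single j.1 j.2 qJ) r t * ((1:ℍ[ℝ]) * qJ * 1⁻¹)
              - fderiv ℝ F (G Q) (single j.1 j.2 qK) r t * ((1:ℍ[ℝ]) * qK * 1⁻¹)))
            * ((1:ℍ[ℝ]) * fderiv ℝ G Q (single n s d) j.1 j.2 * 1⁻¹)
          + ((1/4:ℝ) • (fderiv ℝ F (G Q) (single j.1 j.2 1) r t
              - fderiv ℝ F (G Q) (single j.1 j.2 qI) r t * (qI * qI * qI⁻¹)
              - fderiv ℝ F (G Q) (single j.1 j.2 qJ) r t * (qI * qJ * qI⁻¹)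
              - fderiv ℝ F (G Q) (single j.1 j.2 qK) r t * (qI * qK * qI⁻¹)))
            * (qI * fderiv ℝ G Q (single n s d) j.1 j.2 * qI⁻¹)
          + ((1/4:ℝ) • (fderiv ℝ F (G Q) (single j.1 j.2 1) r t
              - fderiv ℝ F (G Q) (single j.1 j.2 qI) r t * (qJ * qI * qJ⁻¹)
              - fderiv ℝ F (G Q) (single j.1 j.2 qJ) r t * (qJ * qJ * qJ⁻¹)
              - fderiv ℝ F (G Q) (single j.1 j.2 qK) r t * (qJ * qK * qJ⁻¹)))
            * (qJ * fderiv ℝ G Q (single n s d) j.1 j.2 * qJ⁻¹)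
          + ((1/4:ℝ) • (fderiv ℝ F (G Q) (single j.1 j.2 1) r t
              - fderiv ℝ F (G Q) (single j.1 j.2 qI) r t * (qK * qI * qK⁻¹)
              - fderiv ℝ F (G Q) (single j.1 j.2 qJ) r t * (qK * qJ * qK⁻¹)
              - fderiv ℝ F (G Q) (single j.1 j.2 qK) r t * (qK * qK * qK⁻¹)))
            * (qK * fderiv ℝ G Q (single n s d) j.1 j.2 * qK⁻¹) := by
    intro j d
    have h := ghr_rep ((evalCLM r t).comp ((fderiv ℝ F (G Q)).comp (singleCLM j.1 j.2)))
      (fderiv ℝ G Q (single n s d) j.1 j.2)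
    simp only [ContinuousLinearMap.coe_comp', Function.comp_apply, evalCLM_apply,
      singleCLM_apply] at h
    exact h
  simp only [h2, h3]
  simp only [ghrE, h1, h5]
  rw [Finset.sum_mul, Finset.sum_mul, Finset.sum_mul, ← Finset.sum_sub_distrib,
    ← Finset.sum_sub_distrib, ← Finset.sum_sub_distrib, Finset.smul_sum,
    ← Finset.sum_add_distrib, ← Finset.sum_add_distrib, ← Finset.sum_add_distrib]
  refine Finset.sum_congr rfl fun j _ => ?_
  exact distrib4 _ _ _ _ _ _ _ _ _ _ _ _ _ _ _ _ _ _ _ _ _ _ _ _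
end
end
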